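/- A ring R is local if and only if R = U(R) ∪ √Δ(R), i.e., every element of R is either a unit or lies in √Δ(R). -/

import Mathlib

/-- Δ(R) = {x : 1 - x*u is a unit for every unit u}. -/
def Delta (R : Type*) [Ring R] : Set R :=
  {x | ∀ u : R, IsUnit u → IsUnit (1 - x * u)}

/-- √Δ(R) = {x : x^n ∈ Δ(R) for some n ≥ 1}. -/
def sqrtDelta (R : Type*) [Ring R] : Set R :=
  {x | ∃ n : ℕ, 1 ≤ n ∧ x ^ n ∈ Delta R}

theorem stmt_9 {R : Type*} [Ring R] [Nontrivial R] :
    IsLocalRing R ↔ ∀ a : R, IsUnit a ∨ a ∈ sqrtDelta R := by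
  constructor
  · intro hL a
    haveI : IsLocalRing R := hL
    by_cases ha : IsUnit a
    · exact Or.inl ha
    · refine Or.inr ⟨1, le_refl 1, ?_⟩
      intro u hu
      simp only [pow_one]
      have hsum : a * u + (1 - a * u) = 1 := by abel
      rcases IsLocalRing.isUnit_or_isUnit_of_add_one hsum with h | h
      · exfalso
        apply ha
        have := h.mul hu.unit⁻¹.isUnit
        rwa [mul_assoc, IsUnit.mul_val_inv, mul_one] at this
      · exact h
  · intro h
    refine ⟨fun {a b} hab => ?_⟩
    have hb : b = 1 - a := eq_sub_of_add_eq' hab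
    subst hb
    rcases h a with ha | ⟨n, hn, hd⟩
    · exact Or.inl ha
    · right
      have hv : IsUnit (1 - a ^ n) := by simpa using hd 1 isUnit_one
      have h1 : (1 - a) * (∑ i ∈ Finset.range n, a ^ i) = 1 - a ^ n := by
        rw [← neg_sub a 1, neg_mul, mul_geom_sum, neg_sub]
      have h2 : (∑ i ∈ Finset.range n, a ^ i) * (1 - a) = 1 - a ^ n := by
        rw [← neg_sub a 1, mul_neg, geom_sum_mul, neg_sub]
      set s : R := ∑ i ∈ Finset.range n, a ^ i with hs
      obtain ⟨v, hvv⟩ := hv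
      have hva : Commute (v : R) a := by
        show (v : R) * a = a * v
        rw [hvv, sub_mul, mul_sub, one_mul, mul_one, pow_mul_comm']
      have hcomm : (↑v⁻¹ : R) * (1 - a) = (1 - a) * ↑v⁻¹ := by
        have h3 : (↑v⁻¹ : R) * a = a * ↑v⁻¹ := (hva.units_inv_left).eq
        rw [mul_sub, sub_mul, mul_one, one_mul, h3]
      refine isUnit_iff_exists.mpr ⟨s * ↑v⁻¹, ?_, ?_⟩
      · rw [← mul_assoc, h1, ← hvv, Units.mul_inv]
      · calc s * ↑v⁻¹ * (1 - a) = s * (↑v⁻¹ * (1 - a)) := by rw [mul_assoc]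
          _ = s * ((1 - a) * ↑v⁻¹) := by rw [hcomm]
          _ = s * (1 - a) * ↑v⁻¹ := by rw [mul_assoc]
          _ = (1 - a ^ n) * ↑v⁻¹ := by rw [h2]
          _ = (v : R) * ↑v⁻¹ := by rw [hvv]
          _ = 1 := Units.mul_inv v
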